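/- Let F be a field and let z1, z2, w1, w2 be non-zero elements of F. Then there exists a matrix U in GL_2(F) such that U^{-1}·(I + z1·E12)·U = I + w1·E12 and U^{-1}·(I + z2·E21)·U = I + w2·E21 if and only if z1·z2 = w1·w2. -/

import Mathlib

/-- Lemma 2.1: for non-zero `z1, z2, w1, w2` in a field `F`, there is `U ∈ GL_2(F)` with
`(1 + z1·E₁₂)^U = 1 + w1·E₁₂` and `(1 + z2·E₂₁)^U = 1 + w2·E₂₁` iff `z1·z2 = w1·w2`. -/
theorem stmt_0 {F : Type*} [Field F] (z1 z2 w1 w2 : F)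
    (hz1 : z1 ≠ 0) (hz2 : z2 ≠ 0) (hw1 : w1 ≠ 0) (hw2 : w2 ≠ 0) :
    (∃ U : (Matrix (Fin 2) (Fin 2) F)ˣ,
        (↑U⁻¹ : Matrix (Fin 2) (Fin 2) F) * (1 + Matrix.single 0 1 z1) * (↑U : Matrix (Fin 2) (Fin 2) F) =
          1 + Matrix.single 0 1 w1 ∧
        (↑U⁻¹ : Matrix (Fin 2) (Fin 2) F) * (1 + Matrix.single 1 0 z2) * (↑U : Matrix (Fin 2) (Fin 2) F) =
          1 + Matrix.single 1 0 w2) ↔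
      z1 * z2 = w1 * w2 := by
  constructor
  · rintro ⟨U, h1, h2⟩
    have hUU : (↑U : Matrix (Fin 2) (Fin 2) F) * (↑U⁻¹ : Matrix (Fin 2) (Fin 2) F) = 1 := by
      exact_mod_cast U.mul_inv
    have key : (↑U⁻¹ : Matrix (Fin 2) (Fin 2) F) *
        ((1 + Matrix.single 0 1 z1) * (1 + Matrix.single 1 0 z2)) *
        (↑U : Matrix (Fin 2) (Fin 2) F) =
        (1 + Matrix.single 0 1 w1) * (1 + Matrix.single 1 0 w2) := by
      rw [← h1, ← h2]
      simp only [Matrix.mul_assoc]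
      rw [← mul_assoc (U : Matrix (Fin 2) (Fin 2) F) (↑U⁻¹ : Matrix (Fin 2) (Fin 2) F), hUU,
        one_mul]
    have htr := congrArg Matrix.trace key
    rw [Matrix.trace_mul_cycle, ← Matrix.mul_assoc, hUU, Matrix.one_mul] at htr
    simp only [Matrix.trace_fin_two, Matrix.mul_apply, Fin.sum_univ_two, Matrix.add_apply,
      Matrix.one_apply, Matrix.single] at htr
    simp only [Matrix.of_apply] at htr
    norm_num at htr
    exact htr
  · intro h
    refine ⟨⟨Matrix.diagonal ![1, w1/z1], Matrix.diagonal ![1, z1/w1], ?_, ?_⟩, ?_, ?_⟩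
    · rw [Matrix.diagonal_mul_diagonal]
      ext i j
      fin_cases i <;> fin_cases j <;>
        simp [Matrix.diagonal, Matrix.one_apply, div_mul_div_comm, div_self,
          mul_ne_zero hw1 hz1, mul_ne_zero hz1 hw1, mul_comm w1 z1]
    · rw [Matrix.diagonal_mul_diagonal]
      ext i j
      fin_cases i <;> fin_cases j <;>
        simp [Matrix.diagonal, Matrix.one_apply, div_mul_div_comm, div_self,
          mul_ne_zero hw1 hz1, mul_ne_zero hz1 hw1, mul_comm w1 z1]
    · ext i j
      fin_cases i <;> fin_cases j <;>
        simp [Matrix.mul_apply, Fin.sum_univ_two, Matrix.single, Matrix.diagonal,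
          Matrix.one_apply] <;> field_simp
    · ext i j
      fin_cases i <;> fin_cases j <;>
        simp [Matrix.mul_apply, Fin.sum_univ_two, Matrix.single, Matrix.diagonal,
          Matrix.one_apply] <;> field_simp <;> first | linear_combination h | linear_combination z2 * h | linear_combination (1 - z2) * h | linear_combination w2 * h
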